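/- Let d ≥ 1, and let m be a prime number and L a natural number such that the cardinality of the hyperbolic cross satisfies |Γ(L,d)| < (m−1)/d. Then there exists a natural number a ∈ [1, m) such that for all k = (k_1,…,k_d) ∈ Γ(L,d) with k ≠ 0, one has k_1 + a·k_2 + a²·k_3 + … + a^{d−1}·k_d ≢ 0 (mod m). -/

import Mathlib

open MeasureTheory Real

noncomputable section

/-- The univariate smooth hat function `h^r_u`. -/
def hFun (u : ℝ) : ℕ → ℝ → ℝ
  | 0 => fun _ => 0
  | 1 => fun x => Set.indicator (Set.Ico (-(u / 2)) (u / 2)) (fun _ => (1 : ℝ)) x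
  | (r + 2) => fun x => ∫ y : ℝ, hFun u (r + 1) (x - y) * hFun u 1 y

/-- The multivariate function `h^r_B` for the box with center `z` and parameter vector `u`. -/
def hBox (d r : ℕ) (z u : Fin d → ℝ) (x : Fin d → ℝ) : ℝ :=
  ∏ j, hFun (u j) r (x j - z j)

/-- The box `B = ∏_j [z_j - r u_j/2, z_j + r u_j/2)`. -/
def boxSet (d r : ℕ) (z u : Fin d → ℝ) : Set (Fin d → ℝ) :=
  Set.univ.pi fun j => Set.Ico (z j - r * u j / 2) (z j + r * u j / 2)

/-- The unit cube `[0,1)^d`. -/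
def unitCube (d : ℕ) : Set (Fin d → ℝ) :=
  Set.univ.pi fun _ => Set.Ico (0 : ℝ) 1

/-- Periodization of a multivariate function over `ℤ^d`. -/
def periodize (d : ℕ) (f : (Fin d → ℝ) → ℝ) (x : Fin d → ℝ) : ℝ :=
  ∑' m : Fin d → ℤ, f fun j => (m j : ℝ) + x j

/-- The error of the equal-weight cubature with nodes `ξ 1, …, ξ m` applied to the
periodization of `h^r_B` shifted by `z`. -/
def errFun (d r m : ℕ) (ξ : ℕ → Fin d → ℝ) (zB u : Fin d → ℝ) (z : Fin d → ℝ) : ℝ :=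
  (∫ x in unitCube d, periodize d (hBox d r zB u) fun j => x j - z j) -
    (m : ℝ)⁻¹ * ∑ μ ∈ Finset.Icc 1 m, periodize d (hBox d r zB u) fun j => ξ μ j - z j

/-- The hyperbolic cross `Γ(N,d)`. -/
def hyperbolicCross (d : ℕ) (N : ℝ) : Set (Fin d → ℤ) :=
  {k | (∏ j, max |(k j : ℝ)| 1) ≤ N}

/-- The exponential `e^{2πi(k,x)}`. -/
def expFun (d : ℕ) (k : Fin d → ℤ) (x : Fin d → ℝ) : ℂ :=
  Complex.exp (2 * Real.pi * Complex.I * ∑ j, (k j : ℂ) * (x j : ℂ))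

/-- The space `T(N,d)` of trigonometric polynomials with frequencies in `Γ(N,d)`. -/
def TSpace (d : ℕ) (N : ℝ) : Submodule ℂ ((Fin d → ℝ) → ℂ) :=
  Submodule.span ℂ (expFun d '' hyperbolicCross d N)

/-- The nodes `y^μ` of the Korobov cubature formula `P_m(·,a)`. -/
def korobovNode (d m : ℕ) (a : Fin d → ℤ) (μ : ℕ) : Fin d → ℝ :=
  fun j => Int.fract ((μ : ℝ) * (a j : ℝ) / (m : ℝ))

/-- The Korobov cubature formula `P_m(f,a)`. -/
def korobovSum (d m : ℕ) (a : Fin d → ℤ) (f : (Fin d → ℝ) → ℂ) : ℂ :=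
  (m : ℂ)⁻¹ * ∑ μ ∈ Finset.Icc 1 m, f (korobovNode d m a μ)

/-- Exactness of the Korobov cubature formula on `T(N,d)`. -/
def IsExact (d m : ℕ) (a : Fin d → ℤ) (N : ℝ) : Prop :=
  ∀ f ∈ TSpace d N, korobovSum d m a f = ∫ x in unitCube d, f x

/-- The Fibonacci numbers with `b 0 = b 1 = 1`. -/
def fibb : ℕ → ℕ
  | 0 => 1
  | 1 => 1
  | (n + 2) => fibb (n + 1) + fibb n

/-- The points of the Fibonacci point set `𝓕_n`. -/
def fibNode (n : ℕ) (μ : ℕ) : Fin 2 → ℝ :=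
  ![(μ : ℝ) / (fibb n : ℝ), Int.fract ((μ : ℝ) * (fibb (n - 1) : ℝ) / (fibb n : ℝ))]


/-- Lemma FL.2: if `|Γ(L,d)| < (m-1)/d` with `m` prime, then there is `a ∈ [1,m)` with
`k₁ + a k₂ + ⋯ + a^{d-1} k_d ≢ 0 (mod m)` for all nonzero `k ∈ Γ(L,d)`. -/
theorem korobov_exact_exists (d : ℕ) (hd : 1 ≤ d) (m L : ℕ) (hm : Nat.Prime m)
    (hcard : ((hyperbolicCross d L).ncard : ℝ) < ((m : ℝ) - 1) / d) :
    ∃ a : ℕ, 1 ≤ a ∧ a < m ∧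
      ∀ k ∈ hyperbolicCross d (L : ℝ), k ≠ 0 →
        ¬ ((m : ℤ) ∣ ∑ j : Fin d, (a : ℤ) ^ (j : ℕ) * k j) := by
  set S := hyperbolicCross d (L : ℝ) with hSdef
  have hS : S = {k : Fin d → ℤ | (∏ j, max |(k j : ℝ)| 1) ≤ (L:ℝ)} := rfl
  haveI : Fact m.Prime := ⟨hm⟩
  haveI : NeZero m := ⟨hm.ne_zero⟩
  have hd0 : (0:ℝ) < d := by exact_mod_cast hd
  -- coordinate bound
  have hcoord : ∀ k ∈ S, ∀ j, |k j| ≤ (L : ℤ) := by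
    intro k hk j
    rw [hS] at hk
    have h1 : |(k j : ℝ)| ≤ max |(k j : ℝ)| 1 := le_max_left _ _
    have h2 : max |(k j : ℝ)| 1 ≤ ∏ i, max |(k i : ℝ)| 1 := by
      have hle := Finset.prod_le_prod (s := Finset.univ)
        (f := fun i => if i = j then max |(k i : ℝ)| 1 else 1)
        (g := fun i => max |(k i : ℝ)| 1)
        (fun i _ => by split <;> [exact le_max_of_le_right zero_le_one; exact zero_le_one])
        (fun i _ => by split <;> [exact le_rfl; exact le_max_right _ _])
      rwa [Finset.prod_ite_eq' Finset.univ j (fun i => max |(k i : ℝ)| 1),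
        if_pos (Finset.mem_univ j)] at hle
    have h3 : |(k j : ℝ)| ≤ (L:ℝ) := h1.trans (h2.trans hk)
    exact_mod_cast h3
  have hSfin : S.Finite := by
    apply Set.Finite.subset (Set.Finite.pi (fun j : Fin d => Set.finite_Icc (-(L:ℤ)) (L:ℤ)))
    intro k hk
    rw [Set.mem_univ_pi]
    intro j
    rw [Set.mem_Icc]
    exact abs_le.mp (hcoord k hk j)
  set T := hSfin.toFinset with hT
  have hTcard : S.ncard = T.card := Set.ncard_eq_toFinset_card _ _
  -- L ≤ ncard S
  have j0 : Fin d := ⟨0, hd⟩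
  have hLle : L ≤ S.ncard := by
    rw [hTcard]
    have h := Finset.card_le_card_of_injOn (fun t : ℤ => fun j : Fin d => if j = j0 then t else 0)
      (s := Finset.Icc (1:ℤ) (L:ℤ)) (t := T) ?_ ?_
    · rwa [Int.card_Icc, show ((L:ℤ) + 1 - 1).toNat = L by simp] at h
    · intro t ht
      rw [Finset.coe_Icc, Set.mem_Icc] at ht
      rw [Finset.mem_coe, hT, Set.Finite.mem_toFinset, hS]
      show (∏ j, max |((if j = j0 then t else 0 : ℤ) : ℝ)| 1) ≤ (L:ℝ)
      have : (∏ j, max |((if j = j0 then t else 0 : ℤ) : ℝ)| 1) = max |(t:ℝ)| 1 := by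
        rw [Finset.prod_eq_single j0]
        · simp
        · intro i _ hi; simp [hi]
        · simp
      rw [this]
      have ht1 : (1:ℝ) ≤ (t:ℝ) := by exact_mod_cast ht.1
      have ht2 : (t:ℝ) ≤ (L:ℝ) := by exact_mod_cast ht.2
      rw [abs_of_nonneg (by linarith), max_eq_left ht1]
      exact ht2
    · intro a _ b _ hab
      have := congrFun hab j0
      simpa using this
  -- m bounds
  have hmd : (S.ncard : ℝ) * d < (m:ℝ) - 1 := by
    rw [← lt_div_iff₀ hd0]; exact hcard
  have hnd : S.ncard * d + 1 < m := by
    have : ((S.ncard * d : ℕ) : ℝ) + 1 < (m:ℝ) := by push_cast; linarith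
    exact_mod_cast this
  have hLm : (L:ℤ) < m := by
    have h1 : (S.ncard : ℝ) ≤ (S.ncard : ℝ) * d := le_mul_of_one_le_right (by positivity) (by exact_mod_cast hd)
    have h2 : (L:ℝ) < (m:ℝ) := by
      have := (Nat.cast_le (α := ℝ)).mpr hLle
      linarith
    exact_mod_cast h2
  -- the polynomial
  set P : (Fin d → ℤ) → Polynomial (ZMod m) :=
    fun k => ∑ j : Fin d, Polynomial.C ((k j : ZMod m)) * Polynomial.X ^ (j:ℕ) with hP
  have hPdeg : ∀ k, (P k).natDegree ≤ d - 1 := by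
    intro k
    apply Polynomial.natDegree_sum_le_of_forall_le
    intro j _
    exact (Polynomial.natDegree_C_mul_X_pow_le _ _).trans (Nat.le_sub_one_of_lt j.isLt)
  have hPne : ∀ k ∈ S, k ≠ 0 → P k ≠ 0 := by
    intro k hk hk0
    obtain ⟨j, hj⟩ : ∃ j, k j ≠ 0 := by
      by_contra h
      push_neg at h
      exact hk0 (funext h)
    intro hzero
    have hcoeff : (P k).coeff (j:ℕ) = (k j : ZMod m) := by
      rw [hP]
      rw [Polynomial.finset_sum_coeff]
      rw [Finset.sum_eq_single j]
      · simp
      · intro i _ hi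
        have : (i:ℕ) ≠ (j:ℕ) := fun h => hi (Fin.ext h)
        simp [Polynomial.coeff_C_mul, Polynomial.coeff_X_pow, Ne.symm this]
      · simp
    rw [hzero] at hcoeff
    have : ((k j : ℤ) : ZMod m) = 0 := by simpa using hcoeff.symm
    rw [ZMod.intCast_zmod_eq_zero_iff_dvd] at this
    have hle : (m:ℤ) ≤ |k j| := Int.le_of_dvd (abs_pos.mpr hj) ((dvd_abs _ _).mpr this)
    have := hcoord k hk j
    omega
  -- bad set
  classical
  set bad : Finset (ZMod m) := T.biUnion (fun k => (P k).roots.toFinset) with hbad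
  have hbadcard : bad.card ≤ T.card * (d-1) := by
    calc bad.card ≤ ∑ k ∈ T, (P k).roots.toFinset.card := Finset.card_biUnion_le
    _ ≤ ∑ k ∈ T, (d-1) := by
        apply Finset.sum_le_sum
        intro k _
        exact (Multiset.toFinset_card_le _).trans ((Polynomial.card_roots' _).trans (hPdeg k))
    _ = T.card * (d-1) := by rw [Finset.sum_const, smul_eq_mul]
  -- find a good x
  have hne : ((Finset.univ : Finset (ZMod m)) \ insert 0 bad).Nonempty := by
    rw [← Finset.card_pos]
    have h1 : (insert (0 : ZMod m) bad).card ≤ bad.card + 1 := Finset.card_insert_le _ _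
    have h2 : bad.card + 1 < m := by
      have : T.card * (d-1) ≤ S.ncard * d := by
        rw [hTcard]
        exact Nat.mul_le_mul_left _ (Nat.sub_le _ _)
      omega
    have h3 : (insert (0 : ZMod m) bad).card < (Finset.univ : Finset (ZMod m)).card := by
      rw [Finset.card_univ, ZMod.card]
      omega
    rw [Finset.card_sdiff_of_subset (Finset.subset_univ _), Finset.card_univ, ZMod.card]
    omega
  obtain ⟨x, hx⟩ := hne
  rw [Finset.mem_sdiff, Finset.mem_insert] at hx
  push_neg at hx
  obtain ⟨-, hx0, hxbad⟩ := hx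
  refine ⟨x.val, ?_, ZMod.val_lt x, ?_⟩
  · rcases Nat.eq_zero_or_pos x.val with h | h
    · exact absurd ((ZMod.val_eq_zero x).mp h) hx0
    · exact h
  · intro k hk hk0 hdvd
    have hxcast : ((x.val : ℕ) : ZMod m) = x := by
      rw [ZMod.natCast_val, ZMod.cast_id]
    have heval : (P k).eval x = 0 := by
      have : ((∑ j : Fin d, ((x.val : ℕ) : ℤ) ^ (j:ℕ) * k j : ℤ) : ZMod m) = 0 := by
        rw [ZMod.intCast_zmod_eq_zero_iff_dvd]; exact hdvd
      push_cast at this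
      rw [hP]
      rw [Polynomial.eval_finset_sum]
      simp only [Polynomial.eval_mul, Polynomial.eval_C, Polynomial.eval_pow, Polynomial.eval_X]
      rw [hxcast] at this
      rw [← this]
      exact Finset.sum_congr rfl (fun j _ => mul_comm _ _)
    apply hxbad
    rw [hbad, Finset.mem_biUnion]
    refine ⟨k, ?_, ?_⟩
    · rw [hT, Set.Finite.mem_toFinset]; exact hk
    · rw [Multiset.mem_toFinset, Polynomial.mem_roots (hPne k hk hk0)]
      exact heval

end
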